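/- A compactum X is an AANR if and only if the following holds: for every compactum Z, every closed subset Y ⊆ Z, every decreasing sequence Y₁ ⊇ Y₂ ⊇ ⋯ of closed subsets of Z with ⋂ₙ Yₙ = Y, and every continuous function λ : Y → X, there exists a sequence of continuous functions λₙ : Yₙ → X such that λₙ(y) → λ(y) uniformly over y ∈ Y (uniform convergence with respect to some, equivalently any, compatible metric on X). -/

import Mathlib

open Topology Metric Set

universe u v w

noncomputable section AANRAux

noncomputable section

/-- The Hilbert cube. -/
abbrev HCube : Type := ℕ → Set.Icc (0:ℝ) 1

lemma exists_embedding_hilbertCube (W : Type*) [MetricSpace W] [CompactSpace W] [Nonempty W] :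
    ∃ θ : W → HCube, IsEmbedding θ := by
  set u := TopologicalSpace.denseSeq W with hu_def
  have hu : DenseRange u := TopologicalSpace.denseRange_denseSeq W
  set θ : W → HCube := fun x n => ⟨min (dist x (u n)) 1,
    ⟨le_min dist_nonneg zero_le_one, min_le_right _ _⟩⟩ with hθ_def
  have hcont : Continuous θ := by
    apply continuous_pi; intro n
    exact Continuous.subtype_mk ((continuous_id.dist continuous_const).min continuous_const) _
  have hinj : Function.Injective θ := by
    intro a b hab
    by_contra hne
    have hd : 0 < dist a b := dist_pos.2 hne
    set ε : ℝ := min (dist a b / 4) 2⁻¹ with hε_def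
    have hεpos : 0 < ε := lt_min (by linarith) (by norm_num)
    have hεlt : ε < 1 := lt_of_le_of_lt (min_le_right _ _) (by norm_num)
    obtain ⟨n, hn⟩ := hu.exists_dist_lt a hεpos
    have hcoord : min (dist a (u n)) 1 = min (dist b (u n)) 1 := by
      have := congrFun hab n
      exact congrArg Subtype.val this
    have h1 : min (dist a (u n)) 1 = dist a (u n) := min_eq_left (by linarith)
    have h2 : dist b (u n) < ε := by
      rcases le_or_gt 1 (dist b (u n)) with h | h
      · rw [h1, min_eq_right h] at hcoord; linarith
      · rw [h1, min_eq_left h.le] at hcoord; linarith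
    have : dist a b < 2 * ε := by
      calc dist a b ≤ dist a (u n) + dist (u n) b := dist_triangle _ _ _
        _ = dist a (u n) + dist b (u n) := by rw [dist_comm (u n) b]
        _ < 2 * ε := by linarith
    have : dist a b < dist a b / 2 := lt_of_lt_of_le this (by
      have : ε ≤ dist a b / 4 := min_le_left _ _
      linarith)
    linarith
  exact ⟨θ, (hcont.isClosedEmbedding hinj).isEmbedding⟩

lemma exists_unif_modulus {A B : Type*} [MetricSpace A] [MetricSpace B] [CompactSpace A]
    {f : A → B} (hf : Continuous f) {ε : ℝ} (hε : 0 < ε) :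
    ∃ δ > (0:ℝ), ∀ a b : A, dist a b ≤ δ → dist (f a) (f b) ≤ ε := by
  obtain ⟨δ, hδ, H⟩ := Metric.uniformContinuous_iff.1
    (CompactSpace.uniformContinuous_of_continuous hf) ε hε
  exact ⟨δ/2, by linarith, fun a b h => le_of_lt (H (lt_of_le_of_lt h (by linarith)))⟩

lemma exists_inv_modulus {A B : Type*} [MetricSpace A] [MetricSpace B] [CompactSpace A]
    {θ : A → B} (hθ : IsEmbedding θ) {ε : ℝ} (hε : 0 < ε) :
    ∃ δ > (0:ℝ), ∀ a b : A, dist (θ a) (θ b) ≤ δ → dist a b ≤ ε := by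
  haveI : CompactSpace (Set.range θ) :=
    isCompact_iff_compactSpace.mp (isCompact_range hθ.continuous)
  set h := hθ.toHomeomorph with hh
  obtain ⟨δ, hδ, H⟩ := exists_unif_modulus h.symm.continuous hε
  refine ⟨δ, hδ, fun a b hab => ?_⟩
  have ha : h.symm ⟨θ a, mem_range_self a⟩ = a := by
    have : h a = ⟨θ a, mem_range_self a⟩ := rfl
    rw [← this, Homeomorph.symm_apply_apply]
  have hb : h.symm ⟨θ b, mem_range_self b⟩ = b := by
    have : h b = ⟨θ b, mem_range_self b⟩ := rfl
    rw [← this, Homeomorph.symm_apply_apply]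
  have := H ⟨θ a, mem_range_self a⟩ ⟨θ b, mem_range_self b⟩ (by rwa [Subtype.dist_eq])
  rwa [ha, hb] at this

lemma continuousOn_invFun_range {A B : Type*} [TopologicalSpace A] [TopologicalSpace B]
    [Nonempty A] {j : A → B} (hj : IsEmbedding j) :
    ContinuousOn (Function.invFun j) (Set.range j) := by
  rw [continuousOn_iff_continuous_restrict]
  have key : Set.domRestrict (Set.range j) (Function.invFun j)
      = ⇑hj.toHomeomorph.symm := by
    funext y
    apply hj.injective
    have h1 : j (Function.invFun j y.val) = y.val := Function.invFun_eq y.2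
    have h2 : j (hj.toHomeomorph.symm y) = y.val := by
      have : hj.toHomeomorph (hj.toHomeomorph.symm y) = y :=
        Homeomorph.apply_symm_apply _ _
      exact congrArg Subtype.val this
    simpa [h2] using h1
  rw [key]
  exact hj.toHomeomorph.symm.continuous

lemma eventually_subset_of_nested {Z : Type*} [TopologicalSpace Z] [CompactSpace Z]
    {Yn : ℕ → Set Z} (hcl : ∀ n, IsClosed (Yn n)) (hanti : Antitone Yn)
    {V : Set Z} (hV : IsOpen V) (hYV : (⋂ n, Yn n) ⊆ V) :
    ∃ N, ∀ n ≥ N, Yn n ⊆ V := by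
  by_cases hem : ∃ N, Yn N \ V = ∅
  · obtain ⟨N, hN⟩ := hem
    exact ⟨N, fun n hn z hz => by
      by_contra hzv
      exact (Set.eq_empty_iff_forall_notMem.1 hN z) ⟨hanti hn hz, hzv⟩⟩
  · push_neg at hem
    exfalso
    have hne : ∀ n, (Yn n \ V).Nonempty := hem
    have hdir : Directed (fun x1 x2 => x1 ⊇ x2) (fun n => Yn n \ V) := by
      intro m n
      exact ⟨max m n, Set.diff_subset_diff_left (hanti (le_max_left m n)),
        Set.diff_subset_diff_left (hanti (le_max_right m n))⟩
    have hclosed : ∀ n, IsClosed (Yn n \ V) := fun n => (hcl n).sdiff hV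
    have := IsCompact.nonempty_iInter_of_directed_nonempty_isCompact_isClosed
      (fun n => Yn n \ V) hdir hne (fun n => (hclosed n).isCompact) hclosed
    obtain ⟨z, hz⟩ := this
    rw [Set.mem_iInter] at hz
    have hzY : z ∈ ⋂ n, Yn n := Set.mem_iInter.2 fun n => (hz n).1
    exact (hz 0).2 (hYV hzY)

end

/-- The Hilbert cube lifted to an arbitrary universe. -/
abbrev HCubeU : Type w := ULift.{w} HCube


end AANRAux

/-- A compactum `X` is an *approximative absolute neighborhood retract* (AANR). -/
def IsAANR (X : Type u) [TopologicalSpace X] : Prop :=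
  ∀ (Y : Type v) [MetricSpace Y] [CompactSpace Y] (θ : X → Y),
    IsEmbedding θ →
    ∀ ε > (0 : ℝ), ∃ δ > (0 : ℝ), ∃ r : Y → X,
      ContinuousOn r {y | Metric.infDist y (Set.range θ) ≤ δ} ∧
      ∀ x : X, dist (θ (r (θ x))) (θ x) ≤ ε


section AANRAux2

theorem aanr_forward {X : Type u} [MetricSpace X] [CompactSpace X] [Nonempty X]
    (hA : IsAANR.{u, w} X)
    (Z : Type v) [TopologicalSpace Z] [CompactSpace Z]
    [TopologicalSpace.MetrizableSpace Z] [Nonempty Z] (Y : Set Z) (hYcl : IsClosed Y)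
    (Yn : ℕ → Set Z) (hYncl : ∀ n, IsClosed (Yn n)) (hdec : ∀ n, Yn (n + 1) ⊆ Yn n)
    (hint : (⋂ n, Yn n) = Y)
    (lam : Z → X) (hlam : ContinuousOn lam Y) :
    ∃ l : ℕ → Z → X,
      (∀ n, ContinuousOn (l n) (Yn n)) ∧
      ∀ ε > (0 : ℝ), ∃ N : ℕ, ∀ n ≥ N, ∀ y ∈ Y, dist (l n y) (lam y) ≤ ε := by
  classical
  have hanti : Antitone Yn := antitone_nat_of_succ_le hdec
  obtain ⟨θ₀, hθ₀⟩ := exists_embedding_hilbertCube X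
  haveI hCQ : CompactSpace HCubeU.{w} := inferInstance
  letI : TopologicalSpace.MetrizableSpace HCubeU.{w} :=
    (Homeomorph.ulift.{w,0} (X := HCube)).isEmbedding.metrizableSpace
  letI mQ : MetricSpace HCubeU.{w} := TopologicalSpace.metrizableSpaceMetric _
  haveI : @CompactSpace HCubeU.{w} mQ.toUniformSpace.toTopologicalSpace := by exact hCQ
  set j : X → HCubeU.{w} := fun x => ULift.up (θ₀ x) with hjdef
  have hj : @IsEmbedding X HCubeU.{w} _ mQ.toUniformSpace.toTopologicalSpace j := by
    exact (Homeomorph.ulift.{w,0} (X := HCube)).symm.isEmbedding.comp hθ₀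
  set S : Set HCubeU.{w} := Set.range j with hSdef
  have hrm : ∀ m : ℕ, ∃ δ > (0:ℝ), ∃ r : HCubeU.{w} → X,
      @ContinuousOn HCubeU.{w} X mQ.toUniformSpace.toTopologicalSpace _ r {q | infDist q S ≤ δ} ∧
      ∀ x, dist (r (j x)) x ≤ 1 / (m + 1) := by
    intro m
    have hpos : (0:ℝ) < 1 / (m + 1) := by positivity
    obtain ⟨ε', hε', Hm⟩ := exists_inv_modulus hj hpos
    obtain ⟨δ, hδ, r, hr, hrd⟩ := hA HCubeU.{w} j hj ε' hε'
    exact ⟨δ, hδ, r, hr, fun x => Hm _ _ (hrd x)⟩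
  choose δ hδ r hr hrd using hrm
  -- Tietze extension of the coordinates of j ∘ lam
  have hfm : ∀ m : ℕ, ∃ g : C(Z, ℝ), ∀ y (hy : y ∈ Y), g y = ((θ₀ (lam y)) m : ℝ) := by
    intro m
    have hc : Continuous fun y : Y => ((θ₀ (lam y.val)) m : ℝ) := by
      have h1 : Continuous (Y.restrict lam) := hlam.restrict
      exact continuous_subtype_val.comp ((continuous_apply m).comp (hθ₀.continuous.comp h1))
    obtain ⟨g, hg⟩ := ContinuousMap.exists_restrict_eq hYcl ⟨_, hc⟩
    refine ⟨g, fun y hy => ?_⟩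
    have := congrFun (congrArg DFunLike.coe hg) ⟨y, hy⟩
    simpa using this
  choose g hg using hfm
  set F : Z → HCubeU.{w} := fun z => ULift.up (fun m => Set.projIcc 0 1 zero_le_one (g m z)) with hFdef
  have hF : @Continuous Z HCubeU.{w} _ mQ.toUniformSpace.toTopologicalSpace F := by
    exact continuous_uliftUp.comp
      (continuous_pi fun m => continuous_projIcc.comp (g m).continuous)
  have hFY : ∀ y ∈ Y, F y = j (lam y) := by
    intro y hy
    simp only [hFdef, hjdef]
    congr 1
    funext m
    rw [hg m y hy, Set.projIcc_of_mem zero_le_one (θ₀ (lam y) m).2]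
  set D : ℕ → Set Z := fun m => {z | infDist (F z) S ≤ δ m} with hDdef
  set P : ℕ → ℕ → Prop := fun n k => 0 < k ∧ Yn n ⊆ D (k - 1) with hPdef
  set K : ℕ → ℕ := fun n => Nat.findGreatest (P n) n with hKdef
  have hKspec : ∀ n, 0 < K n → Yn n ⊆ D (K n - 1) := by
    intro n hK
    have hne : ¬ (Nat.findGreatest (P n) n = 0) := by
      simp only [hKdef] at hK; omega
    rw [Nat.findGreatest_eq_zero_iff] at hne
    push_neg at hne
    obtain ⟨m, hm1, hm2, hm3⟩ := hne
    exact (Nat.findGreatest_spec hm2 hm3).2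
  set l : ℕ → Z → X := fun n => if 0 < K n then (r (K n - 1)) ∘ F
    else fun _ => Classical.arbitrary X with hldef
  refine ⟨l, ?_, ?_⟩
  · intro n
    by_cases hK : 0 < K n
    · have hsub := hKspec n hK
      simp only [hldef, if_pos hK]
      refine (hr (K n - 1)).comp hF.continuousOn ?_
      intro z hz
      have := hsub hz
      simpa [hDdef] using this
    · simp only [hldef, if_neg hK]
      exact continuousOn_const
  · intro ε hε
    obtain ⟨k0, hk0⟩ := exists_nat_one_div_lt hε
    set k := k0 + 1 with hk_def
    have hV : IsOpen {z | infDist (F z) S < δ (k - 1)} :=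
      isOpen_lt ((continuous_infDist_pt S).comp hF) continuous_const
    have hYV : (⋂ n, Yn n) ⊆ {z | infDist (F z) S < δ (k - 1)} := by
      rw [hint]
      intro y hy
      have hFS : F y ∈ S := by rw [hFY y hy]; exact Set.mem_range_self _
      simp only [Set.mem_setOf_eq]
      rw [infDist_zero_of_mem hFS]
      exact hδ _
    obtain ⟨N₀, hN₀⟩ := eventually_subset_of_nested hYncl hanti hV hYV
    refine ⟨max N₀ k, fun n hn y hy => ?_⟩
    have hkK : k ≤ K n := by
      apply Nat.le_findGreatest (le_trans (le_max_right _ _) hn)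
      refine ⟨by omega, ?_⟩
      intro z hz
      have := hN₀ n (le_trans (le_max_left _ _) hn) hz
      simp only [Set.mem_setOf_eq] at this
      simp only [hDdef, Set.mem_setOf_eq]
      exact le_of_lt this
    have hK : 0 < K n := by omega
    have hly : l n y = r (K n - 1) (F y) := by simp only [hldef, if_pos hK]; rfl
    rw [hly, hFY y hy]
    have hb := hrd (K n - 1) (lam y)
    have hcast : ((K n - 1 : ℕ) : ℝ) + 1 = ((K n : ℕ) : ℝ) := by
      have h1 : (K n - 1) + 1 = K n := Nat.succ_pred_eq_of_pos hK
      exact_mod_cast congrArg (Nat.cast : ℕ → ℝ) h1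
    rw [hcast] at hb
    refine le_trans hb (le_of_lt (lt_of_le_of_lt ?_ hk0))
    apply one_div_le_one_div_of_le
    · positivity
    · exact_mod_cast hkK

end AANRAux2

/-- A compactum `X` is an AANR if and only if: for every compactum `Z`, every closed subset
`Y ⊆ Z`, every decreasing sequence `Y₁ ⊇ Y₂ ⊇ ⋯` of closed subsets of `Z` with
`⋂ n, Yₙ = Y`, and every continuous `λ : Y → X`, there is a sequence of continuous maps
`λₙ : Yₙ → X` with `λₙ y → λ y` uniformly over `y ∈ Y` (uniform convergence taken with
respect to a chosen compatible metric on `X`). -/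
theorem aanr_iff_approximate_extension_property
    (X : Type u) [MetricSpace X] [CompactSpace X] [Nonempty X] :
    IsAANR X ↔
      ∀ (Z : Type v) [TopologicalSpace Z] [CompactSpace Z]
        [TopologicalSpace.MetrizableSpace Z] [Nonempty Z] (Y : Set Z), IsClosed Y →
        ∀ Yn : ℕ → Set Z, (∀ n, IsClosed (Yn n)) → (∀ n, Yn (n + 1) ⊆ Yn n) →
          (⋂ n, Yn n) = Y →
          ∀ lam : Z → X, ContinuousOn lam Y →
            ∃ l : ℕ → Z → X,
              (∀ n, ContinuousOn (l n) (Yn n)) ∧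
              ∀ ε > (0 : ℝ), ∃ N : ℕ, ∀ n ≥ N, ∀ y ∈ Y, dist (l n y) (lam y) ≤ ε := by
  constructor
  · intro hA Z _ _ _ _ Y hYcl Yn hYncl hdec hint lam hlam
    exact aanr_forward hA Z Y hYcl Yn hYncl hdec hint lam hlam
  · -- extension property → AANR
    intro H W _ _ θ hθ ε hε
    haveI : Nonempty W := ⟨θ (Classical.arbitrary X)⟩
    obtain ⟨ι₀, hι₀⟩ := exists_embedding_hilbertCube W
    set Z := ULift.{v} HCube with hZdef
    letI : TopologicalSpace.MetrizableSpace Z :=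
      (Homeomorph.ulift (X := HCube)).isEmbedding.metrizableSpace
    letI mZ : MetricSpace Z := TopologicalSpace.metrizableSpaceMetric Z
    set ι : W → Z := fun w => ULift.up (ι₀ w) with hιdef
    have hι : IsEmbedding ι :=
      (Homeomorph.ulift (X := HCube)).symm.isEmbedding.comp hι₀
    set j : X → Z := fun x => ι (θ x) with hjdef
    have hj : IsEmbedding j := hι.comp hθ
    have hjc : Continuous j := hj.continuous
    set S : Set Z := Set.range j with hSdef
    have hScomp : IsCompact S := isCompact_range hjc
    have hScl : IsClosed S := hScomp.isClosed
    have hSne : S.Nonempty := Set.range_nonempty j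
    set Yn : ℕ → Set Z := fun n => {z | infDist z S ≤ 1 / (n + 1)} with hYndef
    have hYncl : ∀ n, IsClosed (Yn n) :=
      fun n => IsClosed.preimage (continuous_infDist_pt S) isClosed_Iic
    have hYndec : ∀ n, Yn (n + 1) ⊆ Yn n := by
      intro n z hz
      simp only [hYndef, Set.mem_setOf_eq] at hz ⊢
      refine le_trans hz ?_
      apply one_div_le_one_div_of_le
      · positivity
      · push_cast; linarith
    have hint : (⋂ n, Yn n) = S := by
      ext z
      simp only [Set.mem_iInter, hYndef, Set.mem_setOf_eq]
      constructor
      · intro h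
        have h0 : infDist z S = 0 := by
          by_contra hne
          have hpos : 0 < infDist z S := lt_of_le_of_ne infDist_nonneg (Ne.symm hne)
          obtain ⟨n, hn⟩ := exists_nat_one_div_lt hpos
          exact absurd (h n) (not_le.2 hn)
        have := (Metric.mem_closure_iff_infDist_zero hSne).2 h0
        rwa [hScl.closure_eq] at this
      · intro hz n
        have : infDist z S = 0 :=
          (Metric.mem_closure_iff_infDist_zero hSne).1 (subset_closure hz)
        rw [this]; positivity
    have hlamcont : ContinuousOn (Function.invFun j) S := continuousOn_invFun_range hj
    obtain ⟨l, hlc, hconv⟩ := H Z S hScl Yn hYncl hYndec hint (Function.invFun j) hlamcont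
    -- modulus for θ
    obtain ⟨ε₁, hε₁, Hθ⟩ := exists_unif_modulus hθ.continuous hε
    obtain ⟨N, hN⟩ := hconv ε₁ hε₁
    have hNpos : (0:ℝ) < 1 / (N + 1) := by positivity
    obtain ⟨δ₂, hδ₂, Hι⟩ := exists_unif_modulus hι.continuous hNpos
    refine ⟨δ₂, hδ₂, l N ∘ ι, ?_, ?_⟩
    · -- continuity
      have hmaps : Set.MapsTo ι {y | infDist y (Set.range θ) ≤ δ₂} (Yn N) := by
        intro y hy
        have hRcomp : IsCompact (Set.range θ) := isCompact_range hθ.continuous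
        have hRne : (Set.range θ).Nonempty := Set.range_nonempty θ
        obtain ⟨p, hp, hpd⟩ := hRcomp.exists_infDist_eq_dist hRne y
        have hyp : dist y p ≤ δ₂ := by rw [← hpd]; exact hy
        have h2 : dist (ι y) (ι p) ≤ 1 / (N + 1) := Hι y p hyp
        obtain ⟨x, hx⟩ := hp
        have hιp : ι p ∈ S := ⟨x, by rw [hjdef]; simp [hx]⟩
        exact le_trans (infDist_le_dist_of_mem hιp) h2
      exact (hlc N).comp hι.continuous.continuousOn hmaps
    · intro x
      have hjx : j x ∈ S := Set.mem_range_self x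
      have hbd := hN N le_rfl (j x) hjx
      have hinv : Function.invFun j (j x) = x :=
        Function.leftInverse_invFun hj.injective x
      rw [hinv] at hbd
      exact Hθ _ _ hbd
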